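/- arXiv:0711.1148 — 7 statements merged into one kernel-verified Lean document; each statement's English description precedes it below -/
import Mathlib

section
/- Peierls estimate for an incorrect site of color 1: for every h ≥ 0, every β > 0 and every integer k with 1 ≤ k ≤ 2d − 1, one has (e^β − 1)^{−k/2} · b1(β, h) ≤ max(b0(β,h), b1(β,h), b2(β,h)) · (1 + (q − 1)e^{−h})^{−k/(2d)}; in particular, since k ≥ 1 and 1 + (q − 1)e^{−h} ≥ 1, the left-hand side is at most max(b0, b1, b2) · e^{−τ}, where e^{−τ} = (1 + (q − 1)e^{−h})^{−1/(2d)}. -/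
open Real

/-- Ground-state weight per site of the color-0 (disordered) state. -/
noncomputable def b0 (d : ℕ) (q β h : ℝ) : ℝ := exp (-β * d) * (q - 1 + exp h)

/-- Ground-state weight per site of the color-1 (field-aligned) state. -/
noncomputable def b1 (d : ℕ) (β h : ℝ) : ℝ := (1 - exp (-β)) ^ d * exp h

/-- Ground-state weight per site of the color-2 (orthogonal ordered) state. -/
noncomputable def b2 (d : ℕ) (β : ℝ) : ℝ := (1 - exp (-β)) ^ d

/-- The ground-state coexistence line `β₀(h) = ln(1 + (1 + (q-1)e^{-h})^{1/d})`. -/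
noncomputable def β₀ (d : ℕ) (q h : ℝ) : ℝ :=
  log (1 + (1 + (q - 1) * exp (-h)) ^ ((1 : ℝ) / d))

/-- Peierls estimate for an incorrect site of color 1: if the site belongs to `k`
edges of color 0 (with `1 ≤ k ≤ 2d - 1`), its weight `(e^β - 1)^{-k/2} b1(β,h)` is
at most `max(b0,b1,b2) · (1+(q-1)e^{-h})^{-k/(2d)}`, and in particular at most
`max(b0,b1,b2) · e^{-τ}` with `e^{-τ} = (1+(q-1)e^{-h})^{-1/(2d)}`. -/
theorem peierls_color_one (d : ℕ) (q h β : ℝ) (k : ℕ) (hd : 2 ≤ d) (hq : 2 ≤ q)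
    (hh : 0 ≤ h) (hβ : 0 < β) (hk1 : 1 ≤ k) (hk2 : k ≤ 2 * d - 1) :
    (exp β - 1) ^ (-(k : ℝ) / 2) * b1 d β h ≤
        max (b0 d q β h) (max (b1 d β h) (b2 d β)) *
          (1 + (q - 1) * exp (-h)) ^ (-(k : ℝ) / (2 * d)) ∧
      (exp β - 1) ^ (-(k : ℝ) / 2) * b1 d β h ≤
        max (b0 d q β h) (max (b1 d β h) (b2 d β)) *
          (1 + (q - 1) * exp (-h)) ^ (-(1 : ℝ) / (2 * d)) := by
  set x : ℝ := exp β - 1 with hxdef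
  set A : ℝ := 1 + (q - 1) * exp (-h) with hAdef
  set M : ℝ := max (b0 d q β h) (max (b1 d β h) (b2 d β)) with hMdef
  have hx : 0 < x := by
    have : (1:ℝ) < exp β := by
      calc (1:ℝ) = exp 0 := (exp_zero).symm
      _ < exp β := exp_lt_exp.mpr hβ
    simp [hxdef]; linarith
  have hA1 : (1:ℝ) ≤ A := by
    have he : 0 < exp (-h) := exp_pos _
    have : 0 ≤ (q - 1) * exp (-h) := by nlinarith
    simp [hAdef]; linarith
  have hA0 : (0:ℝ) < A := lt_of_lt_of_le one_pos hA1
  have hdR : (0:ℝ) < (d:ℝ) := by positivity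
  have hb1nn : 0 ≤ b1 d β h := by
    have h1 : 0 ≤ 1 - exp (-β) := by
      have : exp (-β) < 1 := by
        calc exp (-β) < exp 0 := exp_lt_exp.mpr (by linarith)
        _ = 1 := exp_zero
      linarith
    unfold b1; positivity
  have hb1M : b1 d β h ≤ M := le_trans (le_max_left _ _) (le_max_right _ _)
  have hb0M : b0 d q β h ≤ M := le_max_left _ _
  have hMnn : 0 ≤ M := le_trans hb1nn hb1M
  -- rewrite b1
  have hxe : 1 - exp (-β) = x * exp (-β) := by
    rw [hxdef, sub_mul, ← exp_add]
    simp
  have hb1 : b1 d β h = x ^ d * (exp (-β * d) * exp h) := by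
    unfold b1
    rw [hxe, mul_pow, ← exp_nat_mul]
    ring_nf
  have hb0 : b0 d q β h = exp (-β * d) * exp h * A := by
    unfold b0
    rw [hAdef, exp_neg h]
    have := (exp_pos h).ne'
    field_simp
    ring
  -- key first inequality
  have key : x ^ (-(k : ℝ) / 2) * b1 d β h ≤ M * A ^ (-(k : ℝ) / (2 * d)) := by
    rcases le_total A (x ^ (d:ℝ)) with hcase | hcase
    · -- A ≤ x^d : x ≥ A^(1/d)
      have h1 : A ^ ((1:ℝ)/d) ≤ x := by
        have := Real.rpow_le_rpow hA0.le hcase (by positivity : (0:ℝ) ≤ 1/d)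
        rwa [← Real.rpow_mul hx.le, mul_one_div, div_self hdR.ne', Real.rpow_one] at this
      have hpos : 0 < A ^ ((1:ℝ)/d) := Real.rpow_pos_of_pos hA0 _
      have hexp : -(k:ℝ)/2 ≤ 0 := by
        have : (0:ℝ) ≤ (k:ℝ) := Nat.cast_nonneg k
        linarith
      have h2 : x ^ (-(k : ℝ) / 2) ≤ (A ^ ((1:ℝ)/d)) ^ (-(k : ℝ) / 2) :=
        Real.rpow_le_rpow_of_nonpos hpos h1 hexp
      have h3 : (A ^ ((1:ℝ)/d)) ^ (-(k : ℝ) / 2) = A ^ (-(k : ℝ) / (2 * d)) := by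
        rw [← Real.rpow_mul hA0.le,
          show (1:ℝ)/d * (-(k:ℝ)/2) = -(k:ℝ)/(2*d) by ring]
      calc x ^ (-(k : ℝ) / 2) * b1 d β h ≤ (A ^ ((1:ℝ)/d)) ^ (-(k : ℝ) / 2) * b1 d β h := by
            apply mul_le_mul_of_nonneg_right h2 hb1nn
        _ = A ^ (-(k : ℝ) / (2 * d)) * b1 d β h := by rw [h3]
        _ ≤ A ^ (-(k : ℝ) / (2 * d)) * M := by
            apply mul_le_mul_of_nonneg_left hb1M (Real.rpow_pos_of_pos hA0 _).le
        _ = M * A ^ (-(k : ℝ) / (2 * d)) := mul_comm _ _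
    · -- x^d ≤ A : x ≤ A^(1/d)
      have h1 : x ≤ A ^ ((1:ℝ)/d) := by
        have := Real.rpow_le_rpow (Real.rpow_nonneg hx.le _) hcase (by positivity : (0:ℝ) ≤ 1/d)
        rwa [← Real.rpow_mul hx.le, mul_one_div, div_self hdR.ne', Real.rpow_one] at this
      have hknn : (0:ℝ) ≤ (d:ℝ) + -(k:ℝ)/2 := by
        have : (k:ℝ) ≤ 2 * d - 1 := by
          have : (k:ℝ) + 1 ≤ 2 * (d:ℝ) := by exact_mod_cast Nat.add_le_of_le_sub (by omega) hk2
          linarith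
        linarith
      have h2 : x ^ ((d:ℝ) + -(k:ℝ)/2) ≤ (A ^ ((1:ℝ)/d)) ^ ((d:ℝ) + -(k:ℝ)/2) :=
        Real.rpow_le_rpow hx.le h1 hknn
      have h3 : (A ^ ((1:ℝ)/d)) ^ ((d:ℝ) + -(k:ℝ)/2) = A * A ^ (-(k : ℝ) / (2 * d)) := by
        rw [← Real.rpow_mul hA0.le,
          show (1:ℝ)/d * ((d:ℝ) + -(k:ℝ)/2) = 1 + -(k:ℝ)/(2*d) by field_simp,
          Real.rpow_add hA0, Real.rpow_one]
      have hlhs : x ^ (-(k : ℝ) / 2) * b1 d β h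
          = x ^ ((d:ℝ) + -(k:ℝ)/2) * (exp (-β * d) * exp h) := by
        rw [hb1, Real.rpow_add hx, Real.rpow_natCast]
        ring
      calc x ^ (-(k : ℝ) / 2) * b1 d β h
          = x ^ ((d:ℝ) + -(k:ℝ)/2) * (exp (-β * d) * exp h) := hlhs
        _ ≤ (A * A ^ (-(k : ℝ) / (2 * d))) * (exp (-β * d) * exp h) := by
            rw [← h3]; apply mul_le_mul_of_nonneg_right h2 (by positivity)
        _ = b0 d q β h * A ^ (-(k : ℝ) / (2 * d)) := by rw [hb0]; ring
        _ ≤ M * A ^ (-(k : ℝ) / (2 * d)) := by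
            apply mul_le_mul_of_nonneg_right hb0M (Real.rpow_pos_of_pos hA0 _).le
  refine ⟨key, le_trans key ?_⟩
  apply mul_le_mul_of_nonneg_left _ hMnn
  apply Real.rpow_le_rpow_of_exponent_le hA1
  have : (1:ℝ) ≤ (k:ℝ) := by exact_mod_cast hk1
  have h2d : (0:ℝ) < 2 * d := by positivity
  rw [div_le_div_iff₀ h2d h2d]
  nlinarith
end

section
/- Peierls estimate for an incorrect site of color 2: for every h ≥ 0, every β > 0 and every integer k with 1 ≤ k ≤ 2d − 1, one has (e^β − 1)^{−k/2} · b2(β, h) ≤ max(b0(β,h), b1(β,h), b2(β,h)) · (q − 1 + e^h)^{−k/(2d)}. -/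
open Real

/-- Peierls estimate for an incorrect site of color 2: if the site belongs to `k`
edges of color 0 (with `1 ≤ k ≤ 2d - 1`), its weight `(e^β - 1)^{-k/2} b2(β,h)` is
at most `max(b0,b1,b2) · (q-1+e^h)^{-k/(2d)}`. -/
theorem peierls_color_two (d : ℕ) (q h β : ℝ) (k : ℕ) (hd : 2 ≤ d) (hq : 2 ≤ q)
    (hh : 0 ≤ h) (hβ : 0 < β) (hk1 : 1 ≤ k) (hk2 : k ≤ 2 * d - 1) :
    (exp β - 1) ^ (-(k : ℝ) / 2) * b2 d β ≤
      max (b0 d q β h) (max (b1 d β h) (b2 d β)) *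
        (q - 1 + exp h) ^ (-(k : ℝ) / (2 * d)) := by
  have hd0 : (0:ℝ) < (d:ℝ) := by exact_mod_cast Nat.lt_of_lt_of_le (by norm_num) hd
  have hdne : (d:ℝ) ≠ 0 := ne_of_gt hd0
  have hx : (0:ℝ) < exp β - 1 := sub_pos.mpr (by simpa using Real.exp_lt_exp.mpr hβ)
  have hQ : (0:ℝ) < q - 1 + exp h := by nlinarith [Real.exp_pos h]
  set x := exp β - 1 with hxdef
  set Q := q - 1 + exp h with hQdef
  have hb2 : b2 d β = x ^ d * exp (-β * ↑d) := by
    have h1 : 1 - exp (-β) = x * exp (-β) := by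
      rw [hxdef, sub_mul, ← Real.exp_add]
      simp
    rw [b2, h1, mul_pow, ← Real.exp_nat_mul]
    ring_nf
  have hb2nn : 0 ≤ b2 d β := by
    rw [hb2]; positivity
  have hknn : (0:ℝ) ≤ (k:ℝ) := Nat.cast_nonneg k
  have hkd : (k:ℝ) + 1 ≤ 2 * (d:ℝ) := by
    have : k + 1 ≤ 2 * d := by omega
    exact_mod_cast this
  have hmax2 : b2 d β ≤ max (b0 d q β h) (max (b1 d β h) (b2 d β)) :=
    le_max_of_le_right (le_max_right _ _)
  have hQpow : (Q ^ ((1:ℝ)/d)) ^ (-(k : ℝ) / 2) = Q ^ (-(k : ℝ) / (2 * d)) := by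
    rw [← Real.rpow_mul hQ.le]
    congr 1
    ring
  by_cases hcase : Q ^ ((1:ℝ)/d) ≤ x
  · -- ordered phase: e^β - 1 ≥ Q^{1/d}
    have h1 : x ^ (-(k : ℝ) / 2) ≤ Q ^ (-(k : ℝ) / (2 * d)) := by
      rw [← hQpow]
      exact Real.rpow_le_rpow_of_nonpos (Real.rpow_pos_of_pos hQ _) hcase
        (by linarith)
    calc x ^ (-(k : ℝ) / 2) * b2 d β
        ≤ Q ^ (-(k : ℝ) / (2 * d)) * (max (b0 d q β h) (max (b1 d β h) (b2 d β))) :=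
          mul_le_mul h1 hmax2 hb2nn (Real.rpow_nonneg hQ.le _)
      _ = _ := mul_comm _ _
  · -- disordered phase: compare with b0
    push_neg at hcase
    have hp : (0:ℝ) ≤ (d:ℝ) - (k:ℝ)/2 := by linarith
    have key : x ^ ((d:ℝ) + (-(k:ℝ)/2)) ≤ Q ^ ((1:ℝ) + (-(k:ℝ)/(2*d))) := by
      have h2 : Q ^ ((1:ℝ) + (-(k:ℝ)/(2*d))) = (Q ^ ((1:ℝ)/d)) ^ ((d:ℝ) - (k:ℝ)/2) := by
        rw [← Real.rpow_mul hQ.le]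
        congr 1
        field_simp
        ring
      rw [h2, show (d:ℝ) + (-(k:ℝ)/2) = (d:ℝ) - (k:ℝ)/2 by ring]
      exact Real.rpow_le_rpow hx.le hcase.le hp
    have lhs_eq : x ^ (-(k : ℝ) / 2) * b2 d β
        = x ^ ((d:ℝ) + (-(k:ℝ)/2)) * exp (-β * ↑d) := by
      rw [hb2, Real.rpow_add hx, ← Real.rpow_natCast x d]
      ring
    have step : x ^ (-(k : ℝ) / 2) * b2 d β ≤ b0 d q β h * Q ^ (-(k : ℝ) / (2 * d)) := by
      rw [lhs_eq, b0, ← hQdef]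
      calc x ^ ((d:ℝ) + (-(k:ℝ)/2)) * exp (-β * ↑d)
          ≤ Q * Q ^ (-(k:ℝ)/(2*(d:ℝ))) * exp (-β * ↑d) := by
            apply mul_le_mul_of_nonneg_right _ (Real.exp_nonneg _)
            calc x ^ ((d:ℝ) + (-(k:ℝ)/2)) ≤ Q ^ ((1:ℝ) + (-(k:ℝ)/(2*d))) := key
              _ = Q * Q ^ (-(k:ℝ)/(2*(d:ℝ))) := by
                  rw [Real.rpow_add hQ, Real.rpow_one]
        _ = exp (-β * ↑d) * Q * Q ^ (-(k:ℝ)/(2*(d:ℝ))) := by ring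
    exact step.trans (mul_le_mul_of_nonneg_right (le_max_left _ _) (Real.rpow_nonneg hQ.le _))
end

section
/- Tricolor edge representation identity: if n is a consistent edge tricoloring of a finite simple graph G, then summing the colored Edwards–Sokal weight over all spin configurations gives Σ_{σ : V → {1,…,q}} ω_CES(σ, n) = (Π_{e ∈ E} e^{−β·1{n(e)=0}} (1 − e^{−β})^{1{n(e)=1} + 1{n(e)=2}}) · e^{h·S1(n)} · (q − 1)^{C2(n)} · (q − 1 + e^h)^{|V| − S1(n) − S2(n)}. -/
open Real
open scoped Classical

noncomputable section

/-- Real-valued indicator of a proposition. -/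
def ind (P : Prop) : ℝ := if P then 1 else 0

variable {V : Type*} [Fintype V] [DecidableEq V] (G : SimpleGraph V)

/-- Both endpoints of the edge `e` carry the spin `1` (encoded as `0 : Fin q`),
i.e. they are aligned with the external field. -/
def BothOne {q : ℕ} [NeZero q] (σ : V → Fin q) (e : Sym2 V) : Prop :=
  ∀ v ∈ e, σ v = 0

/-- Both endpoints of the edge `e` carry equal spins. -/
def Mono {q : ℕ} (σ : V → Fin q) (e : Sym2 V) : Prop :=
  ∀ v ∈ e, ∀ w ∈ e, σ v = σ w

/-- Both endpoints of the edge `e` carry equal spins different from `1`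
(encoded as `0 : Fin q`). -/
def MonoNotOne {q : ℕ} [NeZero q] (σ : V → Fin q) (e : Sym2 V) : Prop :=
  Mono σ e ∧ ∀ v ∈ e, σ v ≠ 0

/-- The colored Edwards–Sokal weight of a spin configuration `σ` together with an
edge tricoloring `n` of the graph `G`, at inverse temperature `β` and field `h`. -/
def omegaCES (q : ℕ) [NeZero q] (β h : ℝ) (σ : V → Fin q)
    (n : G.edgeFinset → Fin 3) : ℝ :=
  (∏ e : G.edgeFinset,
      (exp (-β) * ind (n e = 0)
        + (1 - exp (-β)) * ind (n e = 1) * ind (BothOne σ (e : Sym2 V))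
        + (1 - exp (-β)) * ind (n e = 2) * ind (MonoNotOne σ (e : Sym2 V)))) *
    ∏ v : V, exp (h * ind (σ v = 0))

/-- `S1 n` (resp. `S2 n`): the number of vertices incident to at least one edge of
color `1` (resp. color `2`). -/
def S (G : SimpleGraph V) (n : G.edgeFinset → Fin 3) (c : Fin 3) : ℕ :=
  (Finset.univ.filter fun v : V => ∃ e : G.edgeFinset, n e = c ∧ v ∈ (e : Sym2 V)).card

/-- The graph on `V` whose edges are the edges of `G` colored `2` by `n`. -/
def colorTwoGraph (n : G.edgeFinset → Fin 3) : SimpleGraph V where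
  Adj a b := ∃ e : G.edgeFinset, n e = 2 ∧ (e : Sym2 V) = s(a, b)
  symm := by
    constructor
    rintro a b ⟨e, h2, he⟩
    exact ⟨e, h2, by rw [he, Sym2.eq_swap]⟩
  loopless := by
    constructor
    rintro a ⟨e, h2, he⟩
    have hd : ¬(e : Sym2 V).IsDiag :=
      G.not_isDiag_of_mem_edgeSet (SimpleGraph.mem_edgeFinset.mp e.2)
    rw [he] at hd
    exact hd (Sym2.mk_isDiag_iff.mpr rfl)

/-- `C2 n`: the number of connected components of the graph whose edge set is the
set of edges colored `2` and whose vertex set is the set of their endpoints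
(i.e. the components of `colorTwoGraph G n` containing at least one edge). -/
def C2 (n : G.edgeFinset → Fin 3) : ℕ :=
  Nat.card {c : (colorTwoGraph G n).ConnectedComponent //
    ∃ a, (colorTwoGraph G n).connectedComponentMk a = c ∧
      ∃ b, (colorTwoGraph G n).Adj a b}

/-- The tricolor-edge-representation weight of an edge tricoloring `n`. -/
def terWeight (q : ℕ) (β h : ℝ) (n : G.edgeFinset → Fin 3) : ℝ :=
  (∏ e : G.edgeFinset,
      exp (-β) ^ (if n e = 0 then 1 else 0 : ℕ) *
        (1 - exp (-β)) ^
          ((if n e = 1 then 1 else 0) + (if n e = 2 then 1 else 0) : ℕ)) *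
    exp (h * S G n 1) * ((q : ℝ) - 1) ^ C2 G n *
      ((q : ℝ) - 1 + exp h) ^ (Fintype.card V - S G n 1 - S G n 2)

/-- An edge tricoloring is consistent if no vertex is incident to both a
color-1 edge and a color-2 edge. -/
def Consistent (n : G.edgeFinset → Fin 3) : Prop :=
  ∀ v : V, ¬((∃ e : G.edgeFinset, n e = 1 ∧ v ∈ (e : Sym2 V)) ∧
             (∃ e : G.edgeFinset, n e = 2 ∧ v ∈ (e : Sym2 V)))

/- ### Auxiliary lemmas -/

lemma ind_true {P : Prop} (h : P) : ind P = 1 := if_pos h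
lemma ind_false {P : Prop} (h : ¬P) : ind P = 0 := if_neg h
lemma ind_and (P Q : Prop) : ind (P ∧ Q) = ind P * ind Q := by
  by_cases hP : P <;> by_cases hQ : Q <;> simp [ind, hP, hQ]
lemma ind_congr {P Q : Prop} (h : P ↔ Q) : ind P = ind Q := by
  unfold ind; rw [if_congr h rfl rfl]
lemma prod_ind {ι : Type*} (s : Finset ι) (P : ι → Prop) :
    ∏ i ∈ s, ind (P i) = ind (∀ i ∈ s, P i) := by
  unfold ind; rw [Finset.prod_boole]; simp

namespace TER

variable {G} {q : ℕ} [NeZero q] (n : G.edgeFinset → Fin 3)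

/-- vertices incident to an edge of color `c` -/
def A (c : Fin 3) : Finset V :=
  Finset.univ.filter fun v : V => ∃ e : G.edgeFinset, n e = c ∧ v ∈ (e : Sym2 V)

lemma S_eq (c : Fin 3) : S G n c = (A n c).card := rfl

lemma mem_A_iff {c : Fin 3} {v : V} :
    v ∈ A n c ↔ ∃ e : G.edgeFinset, n e = c ∧ v ∈ (e : Sym2 V) := by
  simp [A]

lemma exists_rep (e : G.edgeFinset) : ∃ a b : V, (e : Sym2 V) = s(a, b) :=
  (e : Sym2 V).inductionOn fun x y => ⟨x, y, rfl⟩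

lemma mem_A2_of_adj {a b : V} (h : (colorTwoGraph G n).Adj a b) : a ∈ A n 2 := by
  obtain ⟨e, h2, he⟩ := h
  exact mem_A_iff n |>.2 ⟨e, h2, by rw [he]; exact Sym2.mem_mk_left a b⟩

lemma exists_adj_of_mem_A2 {v : V} (hv : v ∈ A n 2) :
    ∃ b, (colorTwoGraph G n).Adj v b := by
  obtain ⟨e, h2, hve⟩ := mem_A_iff n |>.1 hv
  obtain ⟨a, b, hab⟩ := exists_rep e
  rw [hab, Sym2.mem_iff] at hve
  rcases hve with rfl | rfl
  · exact ⟨b, e, h2, hab⟩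
  · exact ⟨a, e, h2, by rw [hab, Sym2.eq_swap]⟩

/-- spin is `0` on all color-1 vertices -/
def P1 (σ : V → Fin q) : Prop := ∀ v ∈ A n 1, σ v = 0

/-- spin is nonzero on color-2 vertices and constant along color-2 edges -/
def P2 (σ : V → Fin q) : Prop :=
  (∀ v ∈ A n 2, σ v ≠ 0) ∧ ∀ a b : V, (colorTwoGraph G n).Adj a b → σ a = σ b

lemma valid_iff (σ : V → Fin q) :
    ((∀ e : G.edgeFinset, n e = 1 → BothOne σ (e : Sym2 V)) ∧
      (∀ e : G.edgeFinset, n e = 2 → MonoNotOne σ (e : Sym2 V))) ↔ P1 n σ ∧ P2 n σ := by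
  constructor
  · rintro ⟨H1, H2⟩
    refine ⟨fun v hv => ?_, fun v hv => ?_, fun a b hab => ?_⟩
    · obtain ⟨e, h1, hve⟩ := mem_A_iff n |>.1 hv
      exact H1 e h1 v hve
    · obtain ⟨e, h2, hve⟩ := mem_A_iff n |>.1 hv
      exact (H2 e h2).2 v hve
    · obtain ⟨e, h2, he⟩ := hab
      exact (H2 e h2).1 a (by rw [he]; exact Sym2.mem_mk_left a b)
        b (by rw [he]; exact Sym2.mem_mk_right a b)
  · rintro ⟨H1, Hnz, Hc⟩
    constructor
    · intro e h1 v hv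
      exact H1 v (mem_A_iff n |>.2 ⟨e, h1, hv⟩)
    · intro e h2
      obtain ⟨a, b, hab⟩ := exists_rep e
      have hadj : (colorTwoGraph G n).Adj a b := ⟨e, h2, hab⟩
      have hab' : σ a = σ b := Hc a b hadj
      constructor
      · intro v hv w hw
        rw [hab, Sym2.mem_iff] at hv hw
        rcases hv with rfl | rfl <;> rcases hw with rfl | rfl <;> simp [hab']
      · intro v hv
        exact Hnz v (mem_A_iff n |>.2 ⟨e, h2, hv⟩)

/-- the per-edge coefficient -/
def coef (β : ℝ) (e : G.edgeFinset) : ℝ :=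
  exp (-β) ^ (if n e = 0 then 1 else 0 : ℕ) *
    (1 - exp (-β)) ^ ((if n e = 1 then 1 else 0) + (if n e = 2 then 1 else 0) : ℕ)

lemma fin3_cases (x : Fin 3) : x = 0 ∨ x = 1 ∨ x = 2 := by
  fin_cases x <;> simp

lemma edge_factor (β : ℝ) (σ : V → Fin q) (e : G.edgeFinset) :
    exp (-β) * ind (n e = 0)
      + (1 - exp (-β)) * ind (n e = 1) * ind (BothOne σ (e : Sym2 V))
      + (1 - exp (-β)) * ind (n e = 2) * ind (MonoNotOne σ (e : Sym2 V))
    = coef n β e * (ind (n e = 1 → BothOne σ (e : Sym2 V)) *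
        ind (n e = 2 → MonoNotOne σ (e : Sym2 V))) := by
  rcases fin3_cases (n e) with h | h | h <;>
    · unfold coef
      by_cases hB : BothOne σ (e : Sym2 V) <;> by_cases hM : MonoNotOne σ (e : Sym2 V) <;>
        simp [h, ind, hB, hM] <;> ring

lemma omega_eq (β h : ℝ) (σ : V → Fin q) :
    omegaCES G q β h σ n =
      (∏ e : G.edgeFinset, coef n β e) * ind (P1 n σ ∧ P2 n σ) *
        ∏ v : V, exp (h * ind (σ v = 0)) := by
  unfold omegaCES
  congr 1
  rw [Finset.prod_congr rfl fun e _ => edge_factor n β σ e, Finset.prod_mul_distrib,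
    Finset.prod_mul_distrib, prod_ind, prod_ind, ← ind_and]
  congr 1
  refine ind_congr ?_
  rw [← valid_iff n σ]
  simp

/-- union of color-1 and color-2 vertex sets -/
def M : Finset V := A n 1 ∪ A n 2

lemma disjA (hn : Consistent G n) : Disjoint (A (G := G) n 1) (A n 2) := by
  rw [Finset.disjoint_left]
  intro v h1 h2
  exact hn v ⟨(mem_A_iff n).1 h1, (mem_A_iff n).1 h2⟩

lemma indP1_prod (h : ℝ) (σ : V → Fin q) :
    ind (P1 n σ) * ∏ v ∈ A n 1, exp (h * ind (σ v = 0))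
      = ind (P1 n σ) * exp h ^ (A (G := G) n 1).card := by
  by_cases hP : P1 n σ
  · have key : ∀ v ∈ A (G := G) n 1, exp (h * ind (σ v = 0)) = exp h := by
      intro v hv; rw [ind_true (hP v hv), mul_one]
    rw [Finset.prod_congr rfl key, Finset.prod_const]
  · rw [ind_false hP, zero_mul, zero_mul]

lemma indP2_prod (h : ℝ) (σ : V → Fin q) :
    ind (P2 n σ) * ∏ v ∈ A n 2, exp (h * ind (σ v = 0)) = ind (P2 n σ) := by
  by_cases hP : P2 n σ
  · have key : ∀ v ∈ A (G := G) n 2, exp (h * ind (σ v = 0)) = 1 := by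
      intro v hv; rw [ind_false (hP.1 v hv), mul_zero, exp_zero]
    rw [Finset.prod_congr rfl key, Finset.prod_const_one, mul_one]
  · rw [ind_false hP, zero_mul]

/-- valid configurations on `M` -/
def P' (τ : {v : V // v ∈ M n} → Fin q) : Prop :=
  (∀ w : {v : V // v ∈ M n}, w.1 ∈ A n 1 → τ w = 0) ∧
  (∀ w : {v : V // v ∈ M n}, w.1 ∈ A n 2 → τ w ≠ 0) ∧
  (∀ w w' : {v : V // v ∈ M n}, (colorTwoGraph G n).Adj w.1 w'.1 → τ w = τ w')

lemma walk_const {τ : {v : V // v ∈ M n} → Fin q}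
    (hc : ∀ w w' : {v : V // v ∈ M n}, (colorTwoGraph G n).Adj w.1 w'.1 → τ w = τ w') :
    ∀ {a b : V} (p : (colorTwoGraph G n).Walk a b) (ha : a ∈ M n) (hb : b ∈ M n),
      τ ⟨a, ha⟩ = τ ⟨b, hb⟩ := by
  intro a b p
  induction p with
  | nil => intro ha hb; rfl
  | @cons u c d hadj p ih =>
    intro ha hb
    have hcM : c ∈ M n := Finset.mem_union_right _ (mem_A2_of_adj n hadj.symm)
    exact (hc ⟨u, ha⟩ ⟨c, hcM⟩ hadj).trans (ih hcM hb)

abbrev Comp : Type _ := {c : (colorTwoGraph G n).ConnectedComponent //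
    ∃ a, (colorTwoGraph G n).connectedComponentMk a = c ∧ ∃ b, (colorTwoGraph G n).Adj a b}

def repv (c : Comp n) : V := c.2.choose
lemma repv_mk (c : Comp n) :
    (colorTwoGraph G n).connectedComponentMk (repv n c) = c.1 := c.2.choose_spec.1
lemma repv_mem (c : Comp n) : repv n c ∈ A (G := G) n 2 := by
  obtain ⟨b, hb⟩ := c.2.choose_spec.2
  exact mem_A2_of_adj n hb

lemma count_eq (hn : Consistent G n) :
    Nat.card {τ : {v : V // v ∈ M n} → Fin q // P' n τ} = (q - 1) ^ C2 G n := by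
  have hA12 : ∀ v ∈ A (G := G) n 1, v ∉ A (G := G) n 2 := fun v h1 h2 =>
    hn v ⟨(mem_A_iff n).1 h1, (mem_A_iff n).1 h2⟩
  have e : {τ : {v : V // v ∈ M n} → Fin q // P' n τ} ≃ (Comp n → {s : Fin q // s ≠ 0}) := by
    refine ⟨fun τ c => ⟨τ.1 ⟨repv n c, Finset.mem_union_right _ (repv_mem n c)⟩,
        τ.2.2.1 _ (repv_mem n c)⟩,
      fun g => ⟨fun w => if h : w.1 ∈ A n 2 then
        (g ⟨(colorTwoGraph G n).connectedComponentMk w.1,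
            w.1, rfl, exists_adj_of_mem_A2 n h⟩).1 else 0, ?_, ?_, ?_⟩, ?_, ?_⟩
    · intro w h1; dsimp only; rw [dif_neg (hA12 _ h1)]
    · intro w h2; dsimp only; rw [dif_pos h2]; exact (g _).2
    · intro w w' hadj
      dsimp only
      have h2 : w.1 ∈ A (G := G) n 2 := mem_A2_of_adj n hadj
      have h2' : w'.1 ∈ A (G := G) n 2 := mem_A2_of_adj n hadj.symm
      rw [dif_pos h2, dif_pos h2']
      exact congrArg (fun x => (g x).1)
        (Subtype.ext (SimpleGraph.ConnectedComponent.sound hadj.reachable))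
    · rintro ⟨τ, hτ⟩
      apply Subtype.ext
      funext w
      dsimp only
      by_cases h2 : w.1 ∈ A (G := G) n 2
      · rw [dif_pos h2]
        have hre : (colorTwoGraph G n).Reachable
            (repv n ⟨(colorTwoGraph G n).connectedComponentMk w.1,
              w.1, rfl, exists_adj_of_mem_A2 n h2⟩) w.1 :=
          SimpleGraph.ConnectedComponent.exact (repv_mk n _)
        obtain ⟨p⟩ := hre
        exact walk_const n hτ.2.2 p _ w.2
      · rw [dif_neg h2]
        rcases Finset.mem_union.1 w.2 with h1 | h1'
        · exact (hτ.1 w h1).symm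
        · exact absurd h1' h2
    · intro g
      funext c
      apply Subtype.ext
      dsimp only
      rw [dif_pos (repv_mem n c)]
      exact congrArg (fun x => (g x).1) (Subtype.ext (repv_mk n c))
  rw [Nat.card_congr e, Nat.card_fun]
  congr 1
  rw [Nat.card_eq_fintype_card]
  rw [Fintype.card_subtype_compl, Fintype.card_subtype_eq, Fintype.card_fin]

lemma sum_ind_eq (hn : Consistent G n) :
    ∑ τ : {v : V // v ∈ M n} → Fin q, ind (P' n τ) = ((q - 1 : ℕ) : ℝ) ^ C2 G n := by
  unfold ind
  rw [Finset.sum_boole]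
  have hcard : (Finset.univ.filter (P' (G := G) n (q := q))).card = (q - 1) ^ C2 G n := by
    rw [← Fintype.card_subtype, ← Nat.card_eq_fintype_card, count_eq n hn]
  rw [hcard]
  push_cast
  rfl

lemma sum_split (h : ℝ) :
    ∑ σ : V → Fin q, ind (P1 n σ ∧ P2 n σ) * ∏ v ∈ (M n)ᶜ, exp (h * ind (σ v = 0))
    = (∑ τ : {v : V // v ∈ M n} → Fin q, ind (P' n τ)) *
      (∑ ρ : {v : V // v ∉ M n} → Fin q,
        ∏ w : {v : V // v ∉ M n}, exp (h * ind (ρ w = 0))) := by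
  rw [Finset.sum_mul_sum]
  rw [← Equiv.sum_comp (Equiv.piEquivPiSubtypeProd (fun v => v ∈ M n) (fun _ => Fin q)).symm
      (fun σ => ind (P1 n σ ∧ P2 n σ) * ∏ v ∈ (M n)ᶜ, exp (h * ind (σ v = 0)))]
  rw [Fintype.sum_prod_type]
  refine Finset.sum_congr rfl fun τ _ => Finset.sum_congr rfl fun ρ _ => ?_
  set σ := (Equiv.piEquivPiSubtypeProd (fun v => v ∈ M n) (fun _ => Fin q)).symm (τ, ρ) with hσ
  have hσM : ∀ (v : V) (hv : v ∈ M n), σ v = τ ⟨v, hv⟩ := by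
    intro v hv; simp [hσ, Equiv.piEquivPiSubtypeProd, hv]
  have hσF : ∀ (v : V) (hv : v ∉ M n), σ v = ρ ⟨v, hv⟩ := by
    intro v hv; simp [hσ, Equiv.piEquivPiSubtypeProd, hv]
  congr 1
  · refine ind_congr ?_
    constructor
    · rintro ⟨h1, hnz, hc⟩
      refine ⟨fun w hw => ?_, fun w hw => ?_, fun w w' hadj => ?_⟩
      · exact (hσM w.1 w.2).symm.trans (h1 w.1 hw)
      · exact fun hzero => hnz w.1 hw ((hσM w.1 w.2).trans hzero)
      · exact ((hσM w.1 w.2).symm.trans (hc w.1 w'.1 hadj)).trans (hσM w'.1 w'.2)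
    · rintro ⟨H1, H2, H3⟩
      constructor
      · intro v hv
        have hvM : v ∈ M n := Finset.mem_union_left _ hv
        exact (hσM v hvM).trans (H1 ⟨v, hvM⟩ hv)
      · constructor
        · intro v hv hzero
          have hvM : v ∈ M n := Finset.mem_union_right _ hv
          exact H2 ⟨v, hvM⟩ hv ((hσM v hvM).symm.trans hzero)
        · intro a b hadj
          have haM : a ∈ M n := Finset.mem_union_right _ (mem_A2_of_adj n hadj)
          have hbM : b ∈ M n := Finset.mem_union_right _ (mem_A2_of_adj n hadj.symm)
          exact ((hσM a haM).trans (H3 ⟨a, haM⟩ ⟨b, hbM⟩ hadj)).trans (hσM b hbM).symm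
  · rw [Finset.prod_subtype ((M n)ᶜ) (fun v => Finset.mem_compl)
      (fun v => exp (h * ind (σ v = 0)))]
    exact Finset.prod_congr rfl fun w _ => by rw [hσF w.1 w.2]

lemma sum_g (h : ℝ) : ∑ s : Fin q, exp (h * ind (s = 0)) = (q : ℝ) - 1 + exp h := by
  have key : ∀ s : Fin q, exp (h * ind (s = 0)) = 1 + if s = 0 then exp h - 1 else 0 := by
    intro s
    by_cases hs : s = 0
    · rw [ind_true hs, mul_one, if_pos hs]; ring
    · rw [ind_false hs, mul_zero, exp_zero, if_neg hs]; ring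
  rw [Finset.sum_congr rfl fun s _ => key s, Finset.sum_add_distrib,
    Finset.sum_ite_eq' Finset.univ (0 : Fin q), Finset.sum_const]
  simp
  ring

lemma sum_free (h : ℝ) :
    ∑ ρ : {v : V // v ∉ M n} → Fin q, ∏ w : {v : V // v ∉ M n}, exp (h * ind (ρ w = 0))
    = ((q : ℝ) - 1 + exp h) ^ Fintype.card {v : V // v ∉ M n} := by
  have hps := Finset.prod_univ_sum (fun _ : {v : V // v ∉ M n} => (Finset.univ : Finset (Fin q)))
    (fun _ s => exp (h * ind (s = 0)))
  rw [Fintype.piFinset_univ] at hps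
  rw [← hps, Finset.prod_congr rfl fun w _ => sum_g (q := q) h, Finset.prod_const,
    Finset.card_univ]

lemma card_F (hn : Consistent G n) :
    Fintype.card {v : V // v ∉ M (G := G) n} = Fintype.card V - S G n 1 - S G n 2 := by
  rw [Fintype.card_subtype_compl]
  have : Fintype.card {v : V // v ∈ M (G := G) n} = (M (G := G) n).card := Fintype.card_coe _
  rw [this, M, Finset.card_union_of_disjoint (disjA n hn), S_eq, S_eq, Nat.sub_sub]

end TER

/-- Tricolor edge representation identity: for a consistent edge tricoloring `n`
of a finite simple graph, summing the colored Edwards–Sokal weight over all spin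
configurations yields the tricolor-edge-representation weight. -/
theorem sum_omegaCES_eq_terWeight (q : ℕ) [NeZero q] (hq : 2 ≤ q) (β h : ℝ)
    (hβ : 0 < β) (n : G.edgeFinset → Fin 3) (hn : Consistent G n) :
    ∑ σ : V → Fin q, omegaCES G q β h σ n = terWeight G q β h n := by
  have hdisj := TER.disjA n hn
  set C : ℝ := ∏ e : G.edgeFinset, TER.coef n β e with hC
  have hsplit : ∀ σ : V → Fin q, omegaCES G q β h σ n =
      (C * exp h ^ (TER.A (G := G) n 1).card) *
        (ind (TER.P1 n σ ∧ TER.P2 n σ) * ∏ v ∈ (TER.M n)ᶜ, exp (h * ind (σ v = 0))) := by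
    intro σ
    rw [TER.omega_eq n β h σ,
      ← Finset.prod_mul_prod_compl (TER.M n) (fun v => exp (h * ind (σ v = 0)))]
    have hM : ∏ v ∈ TER.M n, exp (h * ind (σ v = 0)) =
        (∏ v ∈ TER.A n 1, exp (h * ind (σ v = 0))) *
          ∏ v ∈ TER.A n 2, exp (h * ind (σ v = 0)) := by
      rw [TER.M, Finset.prod_union hdisj]
    rw [hM, ind_and]
    have l1 := TER.indP1_prod n h σ
    have l2 := TER.indP2_prod n h σ
    calc C * (ind (TER.P1 n σ) * ind (TER.P2 n σ)) *
          ((∏ v ∈ TER.A n 1, exp (h * ind (σ v = 0))) *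
            (∏ v ∈ TER.A n 2, exp (h * ind (σ v = 0))) *
            ∏ v ∈ (TER.M n)ᶜ, exp (h * ind (σ v = 0)))
        = C * ((ind (TER.P1 n σ) * ∏ v ∈ TER.A n 1, exp (h * ind (σ v = 0))) *
            ((ind (TER.P2 n σ) * ∏ v ∈ TER.A n 2, exp (h * ind (σ v = 0))) *
              ∏ v ∈ (TER.M n)ᶜ, exp (h * ind (σ v = 0)))) := by ring
      _ = C * ((ind (TER.P1 n σ) * exp h ^ (TER.A (G := G) n 1).card) *
            (ind (TER.P2 n σ) * ∏ v ∈ (TER.M n)ᶜ, exp (h * ind (σ v = 0)))) := by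
          rw [l1, l2]
      _ = (C * exp h ^ (TER.A (G := G) n 1).card) *
            (ind (TER.P1 n σ) * ind (TER.P2 n σ) *
              ∏ v ∈ (TER.M n)ᶜ, exp (h * ind (σ v = 0))) := by ring
      _ = _ := by rw [← ind_and]
  rw [Finset.sum_congr rfl fun σ _ => hsplit σ, ← Finset.mul_sum, TER.sum_split n h,
    TER.sum_ind_eq n hn, TER.sum_free n h, TER.card_F n hn]
  have hq1 : (1 : ℕ) ≤ q := by omega
  have hcast : ((q - 1 : ℕ) : ℝ) = (q : ℝ) - 1 := by push_cast [hq1]; ring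
  have hexp : exp h ^ (TER.A (G := G) n 1).card = exp (h * S G n 1) := by
    rw [TER.S_eq, mul_comm, exp_nat_mul]
  rw [hcast, hexp, terWeight, TER.S_eq]
  simp only [hC, TER.coef]
  ring

end
end

section
/- If an edge tricoloring n of a finite simple graph G is not consistent, i.e. some vertex is incident to both an edge of color 1 and an edge of color 2, then the colored Edwards–Sokal weight vanishes after summing over spins: Σ_{σ : V → {1,…,q}} ω_CES(σ, n) = 0. -/
open Real
open scoped Classical

noncomputable section

variable {V : Type*} [Fintype V] [DecidableEq V] (G : SimpleGraph V)

/-- If an edge tricoloring is not consistent (some vertex is incident to both a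
color-1 edge and a color-2 edge), the colored Edwards–Sokal weight vanishes after
summing over all spin configurations. -/
theorem sum_omegaCES_eq_zero_of_not_consistent (q : ℕ) [NeZero q] (hq : 2 ≤ q)
    (β h : ℝ) (hβ : 0 < β) (n : G.edgeFinset → Fin 3) (hn : ¬ Consistent G n) :
    ∑ σ : V → Fin q, omegaCES G q β h σ n = 0 := by
  simp only [Consistent, not_forall, not_not] at hn
  obtain ⟨v, ⟨e1, h1, hv1⟩, ⟨e2, h2, hv2⟩⟩ := hn
  apply Finset.sum_eq_zero
  intro σ _
  unfold omegaCES
  rw [mul_eq_zero]; left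
  by_cases hσ : σ v = 0
  · apply Finset.prod_eq_zero (Finset.mem_univ e2)
    have hm : ¬ MonoNotOne σ (e2 : Sym2 V) := fun ⟨_, hne⟩ => hne v hv2 hσ
    simp [ind, h2, hm]
  · apply Finset.prod_eq_zero (Finset.mem_univ e1)
    have hb : ¬ BothOne σ (e1 : Sym2 V) := fun hb => hσ (hb v hv1)
    simp [ind, h1, hb]

end
end

section
/- Equality of the Potts and tricolor-edge partition functions: for a finite simple graph G, Σ_{σ : V → {1,…,q}} Π_{{i,j} ∈ E} e^{β(1{σ_i = σ_j} − 1)} Π_{i ∈ V} e^{h·1{σ_i = 1}} = Σ_{n consistent} (Π_{e ∈ E} e^{−β·1{n(e)=0}} (1 − e^{−β})^{1{n(e)=1} + 1{n(e)=2}}) · e^{h·S1(n)} (q − 1)^{C2(n)} (q − 1 + e^h)^{|V| − S1(n) − S2(n)}, where the right-hand sum is over all consistent edge tricolorings n : E → {0,1,2}. -/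
open Real
open scoped Classical

noncomputable section

variable {V : Type*} [Fintype V] [DecidableEq V] (G : SimpleGraph V)

set_option linter.unusedSectionVars false

/-! ### Auxiliary development -/

theorem fin3_cases (c : Fin 3) : c = 0 ∨ c = 1 ∨ c = 2 := by
  revert c; decide

/-- The factor attached to an edge `e` colored `c` in the colored
Edwards–Sokal weight. -/
def EF {q : ℕ} [NeZero q] (β : ℝ) (σ : V → Fin q) (E : Sym2 V) (c : Fin 3) : ℝ :=
  exp (-β) * ind (c = 0) + (1 - exp (-β)) * ind (c = 1) * ind (BothOne σ E)
    + (1 - exp (-β)) * ind (c = 2) * ind (MonoNotOne σ E)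

lemma omegaCES_eq {q : ℕ} [NeZero q] (β h : ℝ) (σ : V → Fin q)
    (n : G.edgeFinset → Fin 3) :
    omegaCES G q β h σ n =
      (∏ e : G.edgeFinset, EF β σ (e : Sym2 V) (n e)) *
        ∏ v : V, exp (h * ind (σ v = 0)) := rfl

lemma mono_iff {q : ℕ} [NeZero q] (σ : V → Fin q) (E : Sym2 V) :
    Mono σ E ↔ BothOne σ E ∨ MonoNotOne σ E := by
  induction E using Sym2.ind with
  | _ a b =>
    constructor
    · intro hm
      by_cases ha : σ a = 0
      · exact Or.inl fun v hv => (hm v hv a (by simp)).trans ha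
      · exact Or.inr ⟨hm, fun v hv hv0 => ha ((hm a (by simp) v hv).trans hv0)⟩
    · rintro (hb | hmn)
      · intro v hv w hw; rw [hb v hv, hb w hw]
      · exact hmn.1

lemma not_bothOne_and_monoNotOne {q : ℕ} [NeZero q] (σ : V → Fin q) (E : Sym2 V) :
    ¬(BothOne σ E ∧ MonoNotOne σ E) := by
  induction E using Sym2.ind with
  | _ a b =>
    rintro ⟨h1, -, h2⟩
    exact h2 a (by simp) (h1 a (by simp))

lemma sum_EF {q : ℕ} [NeZero q] (β : ℝ) (σ : V → Fin q) (E : Sym2 V) :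
    ∑ c : Fin 3, EF β σ E c = exp (β * (ind (Mono σ E) - 1)) := by
  rw [Fin.sum_univ_three]
  by_cases hm : Mono σ E
  · rcases (mono_iff σ E).1 hm with hb | hmn
    · have hnm : ¬MonoNotOne σ E := fun hx => not_bothOne_and_monoNotOne σ E ⟨hb, hx⟩
      simp only [EF, ind, if_pos hb, if_neg hnm, if_pos hm]
      norm_num [Real.exp_zero, show ¬(2:Fin 3)=0 from by decide, show ¬(2:Fin 3)=1 from by decide, show ¬(0:Fin 3)=1 from by decide, show ¬(0:Fin 3)=2 from by decide, show ¬(1:Fin 3)=0 from by decide, show ¬(1:Fin 3)=2 from by decide]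
    · have hnb : ¬BothOne σ E := fun hx => not_bothOne_and_monoNotOne σ E ⟨hx, hmn⟩
      simp only [EF, ind, if_pos hmn, if_neg hnb, if_pos hm]
      norm_num [Real.exp_zero, show ¬(2:Fin 3)=0 from by decide, show ¬(2:Fin 3)=1 from by decide, show ¬(0:Fin 3)=1 from by decide, show ¬(0:Fin 3)=2 from by decide, show ¬(1:Fin 3)=0 from by decide, show ¬(1:Fin 3)=2 from by decide]
  · have hnb : ¬BothOne σ E := fun hx => hm ((mono_iff σ E).2 (Or.inl hx))
    have hnm : ¬MonoNotOne σ E := fun hx => hm ((mono_iff σ E).2 (Or.inr hx))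
    simp only [EF, ind, if_neg hnb, if_neg hnm, if_neg hm]
    norm_num [show ¬(2:Fin 3)=0 from by decide, show ¬(2:Fin 3)=1 from by decide, show ¬(0:Fin 3)=1 from by decide, show ¬(0:Fin 3)=2 from by decide, show ¬(1:Fin 3)=0 from by decide, show ¬(1:Fin 3)=2 from by decide]

/-- Vertex incident to a color-1 edge. -/
abbrev inA (n : G.edgeFinset → Fin 3) (v : V) : Prop :=
  ∃ e : G.edgeFinset, n e = 1 ∧ v ∈ (e : Sym2 V)

/-- Vertex incident to a color-2 edge. -/
abbrev inB (n : G.edgeFinset → Fin 3) (v : V) : Prop :=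
  ∃ e : G.edgeFinset, n e = 2 ∧ v ∈ (e : Sym2 V)

/-- `σ` is compatible with the coloring `n`. -/
def Pg {q : ℕ} [NeZero q] (n : G.edgeFinset → Fin 3) (σ : V → Fin q) : Prop :=
  ∀ e : G.edgeFinset, (n e = 1 → BothOne σ (e : Sym2 V)) ∧
    (n e = 2 → MonoNotOne σ (e : Sym2 V))

lemma prod_EF_eq {q : ℕ} [NeZero q] (β : ℝ) (σ : V → Fin q)
    (n : G.edgeFinset → Fin 3) :
    ∏ e : G.edgeFinset, EF β σ (e : Sym2 V) (n e) =
      (∏ e : G.edgeFinset,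
        exp (-β) ^ (if n e = 0 then 1 else 0 : ℕ) *
          (1 - exp (-β)) ^
            ((if n e = 1 then 1 else 0) + (if n e = 2 then 1 else 0) : ℕ)) *
        ind (Pg G n σ) := by
  by_cases hP : Pg G n σ
  · rw [ind, if_pos hP, mul_one]
    refine Finset.prod_congr rfl fun e _ => ?_
    rcases fin3_cases (n e) with hc | hc | hc
    · simp [EF, hc, ind]
    · simp [EF, hc, ind, (hP e).1 hc]
    · simp [EF, hc, ind, (hP e).2 hc]
  · rw [ind, if_neg hP, mul_zero]
    simp only [Pg, not_forall] at hP
    obtain ⟨e, he⟩ := hP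
    rw [not_and_or] at he
    apply Finset.prod_eq_zero (Finset.mem_univ e)
    rcases he with he | he
    · rw [Classical.not_imp] at he
      simp [EF, he.1, ind, he.2]
    · rw [Classical.not_imp] at he
      simp [EF, he.1, ind, he.2]

section Components

variable (n : G.edgeFinset → Fin 3)

lemma colorTwoGraph_adj {a b : V} : (colorTwoGraph G n).Adj a b ↔
    ∃ e : G.edgeFinset, n e = 2 ∧ (e : Sym2 V) = s(a, b) := Iff.rfl

lemma inB_of_adj {a b : V} (hab : (colorTwoGraph G n).Adj a b) : inB G n a := by
  obtain ⟨e, h2, he⟩ := hab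
  exact ⟨e, h2, by rw [he]; simp⟩

variable {q : ℕ} [NeZero q]

lemma sigma_eq_of_adj {σ : V → Fin q} (hP : Pg G n σ) {a b : V}
    (hab : (colorTwoGraph G n).Adj a b) : σ a = σ b := by
  obtain ⟨e, h2, he⟩ := hab
  exact ((hP e).2 h2).1 a (by rw [he]; simp) b (by rw [he]; simp)

lemma sigma_eq_of_walk {σ : V → Fin q} (hP : Pg G n σ) {a b : V}
    (w : (colorTwoGraph G n).Walk a b) : σ a = σ b := by
  induction w with
  | nil => rfl
  | cons hadj _ ih => exact (sigma_eq_of_adj G n hP hadj).trans ih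

lemma sigma_ne_zero_of_inB {σ : V → Fin q} (hP : Pg G n σ) {v : V}
    (hv : inB G n v) : σ v ≠ 0 := by
  obtain ⟨e, h2, hve⟩ := hv
  exact ((hP e).2 h2).2 v hve

lemma sigma_eq_zero_of_inA {σ : V → Fin q} (hP : Pg G n σ) {v : V}
    (hv : inA G n v) : σ v = 0 := by
  obtain ⟨e, h1, hve⟩ := hv
  exact ((hP e).1 h1) v hve

/-- Connected components of the color-2 graph containing at least one edge. -/
abbrev EC : Type _ :=
  {c : (colorTwoGraph G n).ConnectedComponent //
    ∃ a, (colorTwoGraph G n).connectedComponentMk a = c ∧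
      ∃ b, (colorTwoGraph G n).Adj a b}

/-- The component (with an edge) of a vertex incident to a color-2 edge. -/
def mkEC {v : V} (hv : inB G n v) : EC G n :=
  ⟨(colorTwoGraph G n).connectedComponentMk v, v, rfl, by
    obtain ⟨e, h2, hve⟩ := hv
    refine ⟨Sym2.Mem.other hve, ?_⟩
    show ∃ e' : G.edgeFinset, n e' = 2 ∧ (e' : Sym2 V) = s(v, Sym2.Mem.other hve)
    exact ⟨e, h2, (Sym2.other_spec hve).symm⟩⟩

/-- The (nonzero) common value of a compatible `σ` on a component with an edge. -/
def liftEC (σ : V → Fin q) (hP : Pg G n σ) (c : EC G n) : {s : Fin q // s ≠ 0} :=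
  ⟨SimpleGraph.ConnectedComponent.lift σ
      (fun _ _ p _ => sigma_eq_of_walk G n hP p) c.1, by
    obtain ⟨a, ha, b, hab⟩ := c.2
    rw [← ha, SimpleGraph.ConnectedComponent.lift_mk]
    exact sigma_ne_zero_of_inB G n hP (inB_of_adj G n hab)⟩

/-- The spin configuration associated to a component coloring and free spins. -/
def Psi (p : (EC G n → {s : Fin q // s ≠ 0}) ×
    ({v : V // ¬inA G n v ∧ ¬inB G n v} → Fin q)) (v : V) : Fin q :=
  if hA : inA G n v then 0
  else if hB : inB G n v then (p.1 (mkEC G n hB)).1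
  else p.2 ⟨v, hA, hB⟩

lemma Pg_Psi (hn : Consistent G n)
    (p : (EC G n → {s : Fin q // s ≠ 0}) ×
      ({v : V // ¬inA G n v ∧ ¬inB G n v} → Fin q)) : Pg G n (Psi G n p) := by
  intro e
  constructor
  · intro h1 v hv
    have hA : inA G n v := ⟨e, h1, hv⟩
    simp [Psi, hA]
  · intro h2
    have hBmem : ∀ v ∈ (e : Sym2 V), inB G n v := fun v hv => ⟨e, h2, hv⟩
    have hval : ∀ v (hv : v ∈ (e : Sym2 V)),
        Psi G n p v = (p.1 (mkEC G n (hBmem v hv))).1 := by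
      intro v hv
      have hA : ¬inA G n v := fun hA => hn v ⟨hA, hBmem v hv⟩
      rw [Psi, dif_neg hA, dif_pos (hBmem v hv)]
    constructor
    · intro v hv w hw
      rw [hval v hv, hval w hw]
      have hmk : (colorTwoGraph G n).connectedComponentMk v =
          (colorTwoGraph G n).connectedComponentMk w := by
        by_cases hvw : v = w
        · rw [hvw]
        · have heq : (e : Sym2 V) = s(v, w) := (Sym2.mem_and_mem_iff hvw).1 ⟨hv, hw⟩
          exact SimpleGraph.ConnectedComponent.sound
            (SimpleGraph.Adj.reachable ((colorTwoGraph_adj G n).2 ⟨e, h2, heq⟩))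
      have hcc : mkEC G n (hBmem v hv) = mkEC G n (hBmem w hw) := Subtype.ext hmk
      rw [hcc]
    · intro v hv
      rw [hval v hv]
      exact (p.1 _).2

lemma Psi_phi (σ : V → Fin q) (hP : Pg G n σ) :
    Psi G n (liftEC G n σ hP, fun v => σ v.1) = σ := by
  funext v
  rw [Psi]
  split_ifs with hA hB
  · exact (sigma_eq_zero_of_inA G n hP hA).symm
  · show (liftEC G n σ hP (mkEC G n hB)).1 = σ v
    simp only [liftEC, mkEC, SimpleGraph.ConnectedComponent.lift_mk]
  · rfl

lemma phi_Psi (hn : Consistent G n)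
    (p : (EC G n → {s : Fin q // s ≠ 0}) ×
      ({v : V // ¬inA G n v ∧ ¬inB G n v} → Fin q)) (hP : Pg G n (Psi G n p)) :
    (liftEC G n (Psi G n p) hP, fun v => Psi G n p v.1) = p := by
  obtain ⟨g, f⟩ := p
  simp only [Prod.mk.injEq]
  constructor
  · funext c
    refine Subtype.ext ?_
    obtain ⟨a, ha, b, hab⟩ := c.2
    have hB : inB G n a := inB_of_adj G n hab
    have hA : ¬inA G n a := fun h => hn a ⟨h, hB⟩
    show SimpleGraph.ConnectedComponent.lift (Psi G n (g, f))
      (fun _ _ p _ => sigma_eq_of_walk G n hP p) c.1 = (g c).1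
    conv_lhs => rw [← ha]
    rw [SimpleGraph.ConnectedComponent.lift_mk]
    show Psi G n (g, f) a = _
    rw [Psi, dif_neg hA, dif_pos hB]
    have hc : mkEC G n hB = c := Subtype.ext ha
    rw [hc]
  · funext v
    show Psi G n (g, f) v.1 = f v
    rw [Psi, dif_neg v.2.1, dif_neg v.2.2]

end Components

section Count

variable {q : ℕ} [NeZero q] (n : G.edgeFinset → Fin 3)

lemma sum_spin (hq : 2 ≤ q) (h : ℝ) :
    ∑ s : Fin q, exp (h * ind (s = 0)) = exp h + ((q : ℝ) - 1) := by
  rw [← Finset.sum_erase_add _ _ (Finset.mem_univ (0 : Fin q))]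
  have h1 : ∀ s ∈ Finset.univ.erase (0 : Fin q), exp (h * ind (s = 0)) = 1 := by
    intro s hs
    rw [ind, if_neg (Finset.ne_of_mem_erase hs), mul_zero, Real.exp_zero]
  rw [Finset.sum_congr rfl h1, Finset.sum_const,
    Finset.card_erase_of_mem (Finset.mem_univ _), Finset.card_univ, Fintype.card_fin,
    ind, if_pos rfl, mul_one, nsmul_eq_mul, Nat.cast_sub (by omega : 1 ≤ q)]
  push_cast
  ring

lemma card_EC_vals (hq : 2 ≤ q) :
    Fintype.card (EC G n → {s : Fin q // s ≠ 0}) = (q - 1) ^ C2 G n := by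
  rw [Fintype.card_fun]
  congr 1
  · rw [Fintype.card_subtype_compl, Fintype.card_subtype_eq, Fintype.card_fin]
  · rw [C2, Nat.card_eq_fintype_card]

lemma hS1_card : (Finset.univ.filter fun v : V => inA G n v).card = S G n 1 := rfl

lemma hS2_card : (Finset.univ.filter fun v : V => inB G n v).card = S G n 2 := rfl

lemma card_free (hn : Consistent G n) :
    Fintype.card {v : V // ¬inA G n v ∧ ¬inB G n v} =
      Fintype.card V - S G n 1 - S G n 2 := by
  rw [Fintype.card_subtype]
  have hset : Finset.univ.filter (fun v : V => ¬inA G n v ∧ ¬inB G n v) =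
      Finset.univ \ ((Finset.univ.filter fun v : V => inA G n v) ∪
        (Finset.univ.filter fun v : V => inB G n v)) := by
    ext v
    simp only [inA, inB, Finset.mem_filter, Finset.mem_univ, true_and,
      Finset.mem_sdiff, Finset.mem_union, not_or]
  have hdisj : Disjoint (Finset.univ.filter fun v : V => inA G n v)
      (Finset.univ.filter fun v : V => inB G n v) := by
    rw [Finset.disjoint_left]
    intro v hv1 hv2
    rw [Finset.mem_filter] at hv1 hv2
    exact hn v ⟨hv1.2, hv2.2⟩
  rw [hset, Finset.card_sdiff_of_subset (Finset.subset_univ _),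
    Finset.card_union_of_disjoint hdisj, Finset.card_univ, hS1_card, hS2_card,
    Nat.sub_add_eq]

lemma sum_core (hq : 2 ≤ q) (hn : Consistent G n) (h : ℝ) :
    ∑ σ : V → Fin q, ind (Pg G n σ) * ∏ v : V, exp (h * ind (σ v = 0)) =
      exp (h * (S G n 1 : ℕ)) * ((q : ℝ) - 1) ^ C2 G n *
        ((q : ℝ) - 1 + exp h) ^ (Fintype.card V - S G n 1 - S G n 2) := by
  have hite : ∀ σ : V → Fin q, ind (Pg G n σ) * ∏ v : V, exp (h * ind (σ v = 0)) =
      if Pg G n σ then ∏ v : V, exp (h * ind (σ v = 0)) else 0 := by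
    intro σ; rw [ind]; split_ifs <;> simp
  rw [Finset.sum_congr rfl fun σ _ => hite σ, ← Finset.sum_filter]
  have hb : ∑ σ ∈ Finset.univ.filter fun σ : V → Fin q => Pg G n σ,
      ∏ v : V, exp (h * ind (σ v = 0)) =
      ∑ p : (EC G n → {s : Fin q // s ≠ 0}) ×
          ({v : V // ¬inA G n v ∧ ¬inB G n v} → Fin q),
        ∏ v : V, exp (h * ind (Psi G n p v = 0)) := by
    refine Finset.sum_bij'
      (fun σ hσ => (liftEC G n σ (Finset.mem_filter.1 hσ).2, fun v => σ v.1))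
      (fun p _ => Psi G n p) (fun _ _ => Finset.mem_univ _)
      (fun p _ => Finset.mem_filter.2 ⟨Finset.mem_univ _, Pg_Psi G n hn p⟩)
      ?_ ?_ ?_
    · intro σ hσ; exact Psi_phi G n σ (Finset.mem_filter.1 hσ).2
    · intro p _; exact phi_Psi G n hn p _
    · intro σ hσ; rw [Psi_phi G n σ (Finset.mem_filter.1 hσ).2]
  rw [hb]
  have hsplit : ∀ p : (EC G n → {s : Fin q // s ≠ 0}) ×
      ({v : V // ¬inA G n v ∧ ¬inB G n v} → Fin q),
      ∏ v : V, exp (h * ind (Psi G n p v = 0)) =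
        exp h ^ S G n 1 *
          ∏ w : {v : V // ¬inA G n v ∧ ¬inB G n v}, exp (h * ind (p.2 w = 0)) := by
    intro p
    have e1 : ∀ v ∈ Finset.univ.filter (fun v : V => inA G n v),
        exp (h * ind (Psi G n p v = 0)) = exp h := by
      intro v hv
      have hA := (Finset.mem_filter.1 hv).2
      rw [Psi, dif_pos hA, ind, if_pos rfl, mul_one]
    have e2 : ∀ v ∈ (Finset.univ.filter fun v : V => ¬inA G n v).filter
        (fun v : V => inB G n v), exp (h * ind (Psi G n p v = 0)) = 1 := by
      intro v hv
      rw [Finset.mem_filter, Finset.mem_filter] at hv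
      obtain ⟨⟨-, hA⟩, hB⟩ := hv
      have hne : Psi G n p v ≠ 0 := by
        rw [Psi, dif_neg hA, dif_pos hB]; exact (p.1 _).2
      rw [ind, if_neg hne, mul_zero, Real.exp_zero]
    have e3 : ∏ v ∈ (Finset.univ.filter fun v : V => ¬inA G n v).filter
        (fun v : V => ¬inB G n v), exp (h * ind (Psi G n p v = 0)) =
        ∏ w : {v : V // ¬inA G n v ∧ ¬inB G n v}, exp (h * ind (p.2 w = 0)) := by
      rw [Finset.filter_filter]
      rw [Finset.prod_subtype (p := fun v : V => ¬inA G n v ∧ ¬inB G n v)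
        (Finset.univ.filter fun v : V => ¬inA G n v ∧ ¬inB G n v)
        (fun x => by simp only [Finset.mem_filter, Finset.mem_univ, true_and])
        (fun v => exp (h * ind (Psi G n p v = 0)))]
      refine Finset.prod_congr rfl fun w _ => ?_
      rw [Psi, dif_neg w.2.1, dif_neg w.2.2]
    rw [← Finset.prod_filter_mul_prod_filter_not Finset.univ (fun v : V => inA G n v),
      ← Finset.prod_filter_mul_prod_filter_not
        (Finset.univ.filter fun v : V => ¬inA G n v) (fun v : V => inB G n v),
      Finset.prod_congr rfl e1, Finset.prod_const, Finset.prod_eq_one e2, one_mul,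
      e3, hS1_card]
  rw [Finset.sum_congr rfl fun p _ => hsplit p, Fintype.sum_prod_type]
  simp only [Prod.snd]
  rw [Finset.sum_const, Finset.card_univ, card_EC_vals G n hq, ← Finset.mul_sum]
  have hpi : ∑ f : {v : V // ¬inA G n v ∧ ¬inB G n v} → Fin q,
      ∏ w : {v : V // ¬inA G n v ∧ ¬inB G n v}, exp (h * ind (f w = 0)) =
      ∏ w : {v : V // ¬inA G n v ∧ ¬inB G n v},
        ∑ s : Fin q, exp (h * ind (s = 0)) := by
    rw [Finset.prod_univ_sum, Fintype.piFinset_univ]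
  rw [hpi, Finset.prod_congr rfl fun w _ => sum_spin hq h, Finset.prod_const,
    Finset.card_univ, card_free G n hn]
  rw [nsmul_eq_mul, Nat.cast_pow, Nat.cast_sub (by omega : 1 ≤ q), Nat.cast_one]
  have hexp : exp h ^ S G n 1 = exp (h * (S G n 1 : ℕ)) := by
    rw [mul_comm, Real.exp_nat_mul]
  rw [hexp, add_comm (exp h)]
  ring

end Count

lemma sum_sigma {q : ℕ} [NeZero q] (hq : 2 ≤ q) (β h : ℝ)
    (n : G.edgeFinset → Fin 3) :
    ∑ σ : V → Fin q, omegaCES G q β h σ n =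
      if Consistent G n then terWeight G q β h n else 0 := by
  have hω : ∀ σ : V → Fin q, omegaCES G q β h σ n =
      (∏ e : G.edgeFinset, exp (-β) ^ (if n e = 0 then 1 else 0 : ℕ) *
        (1 - exp (-β)) ^
          ((if n e = 1 then 1 else 0) + (if n e = 2 then 1 else 0) : ℕ)) *
        (ind (Pg G n σ) * ∏ v : V, exp (h * ind (σ v = 0))) := by
    intro σ
    rw [omegaCES_eq, prod_EF_eq]
    ring
  rw [Finset.sum_congr rfl fun σ _ => hω σ, ← Finset.mul_sum]
  split_ifs with hn
  · rw [sum_core G n hq hn h, terWeight]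
    ring
  · simp only [Consistent, not_forall, not_not] at hn
    obtain ⟨v, ⟨e1, h1, hv1⟩, e2, h2, hv2⟩ := hn
    have hz : ∀ σ : V → Fin q, ind (Pg G n σ) = 0 := by
      intro σ
      rw [ind, if_neg]
      intro hP
      exact ((hP e2).2 h2).2 v hv2 (((hP e1).1 h1) v hv1)
    simp [hz]


/-- Equality of the Potts and tricolor-edge partition functions: the Potts
partition function with field `h` equals the sum of the
tricolor-edge-representation weights over all consistent edge tricolorings. -/
theorem potts_partition_eq_ter_partition (q : ℕ) [NeZero q] (hq : 2 ≤ q)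
    (β h : ℝ) (hβ : 0 < β) :
    ∑ σ : V → Fin q,
        (∏ e : G.edgeFinset, exp (β * (ind (Mono σ (e : Sym2 V)) - 1))) *
          ∏ v : V, exp (h * ind (σ v = 0)) =
      ∑ n ∈ Finset.univ.filter (fun n : G.edgeFinset → Fin 3 => Consistent G n),
        terWeight G q β h n := by
  have hexp : ∀ σ : V → Fin q,
      (∏ e : G.edgeFinset, exp (β * (ind (Mono σ (e : Sym2 V)) - 1))) *
        ∏ v : V, exp (h * ind (σ v = 0)) =
      ∑ n : G.edgeFinset → Fin 3, omegaCES G q β h σ n := by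
    intro σ
    have he : ∀ e : G.edgeFinset, exp (β * (ind (Mono σ (e : Sym2 V)) - 1)) =
        ∑ c : Fin 3, EF β σ (e : Sym2 V) c := fun e => (sum_EF β σ _).symm
    rw [Finset.prod_congr rfl fun e _ => he e, Finset.prod_univ_sum,
      Fintype.piFinset_univ, Finset.sum_mul]
    exact Finset.sum_congr rfl fun n _ => (omegaCES_eq G β h σ n).symm
  rw [Finset.sum_congr rfl fun σ _ => hexp σ, Finset.sum_comm,
    Finset.sum_congr rfl fun n _ => sum_sigma G hq β h n]
  exact (Finset.sum_filter _ _).symm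

end
end

section
/- Edwards–Sokal marginal identity: for a finite simple graph G, a fixed spin configuration σ : V → {1,…,q} and β > 0, summing the Edwards–Sokal weight over all bond configurations recovers the Potts weight: Σ_{η : E → {0,1}} Π_{{i,j} ∈ E} [e^{−β} 1{η({i,j})=0} + (1 − e^{−β}) 1{η({i,j})=1} 1{σ_i = σ_j}] = Π_{{i,j} ∈ E} e^{β(1{σ_i = σ_j} − 1)}. -/
open Real
open scoped Classical

noncomputable section

variable {V : Type*} [Fintype V] [DecidableEq V] (G : SimpleGraph V)

/-- Edwards–Sokal marginal identity: for a fixed spin configuration `σ`, summing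
the Edwards–Sokal weight over all bond configurations recovers the Potts weight. -/
theorem sum_ES_bond_eq_potts (q : ℕ) [NeZero q] (hq : 2 ≤ q) (β : ℝ) (hβ : 0 < β)
    (σ : V → Fin q) :
    ∑ η : G.edgeFinset → Fin 2,
        ∏ e : G.edgeFinset,
          (exp (-β) * ind (η e = 0)
            + (1 - exp (-β)) * ind (η e = 1) * ind (Mono σ (e : Sym2 V))) =
      ∏ e : G.edgeFinset, exp (β * (ind (Mono σ (e : Sym2 V)) - 1)) := by
  rw [← Fintype.prod_sum (fun (e : G.edgeFinset) (j : Fin 2) =>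
    exp (-β) * ind (j = 0) + (1 - exp (-β)) * ind (j = 1) * ind (Mono σ (e : Sym2 V)))]
  refine Finset.prod_congr rfl fun e _ => ?_
  rw [Fin.sum_univ_two]
  simp only [ind]
  by_cases h : Mono σ (e : Sym2 V) <;> simp [h, Real.exp_neg]

end
end

section
/- Component-counting bound on ℤ^d: let E be a finite nonempty set of nearest-neighbour edges of the lattice ℤ^d (d ≥ 2), let V(E) be the set of endpoints of edges of E, and for v ∈ V(E) let deg_E(v) be the number of edges of E containing v. Then the number of connected components of the graph (V(E), E) is at most Σ_{v ∈ V(E)} 2^{−deg_E(v)}. -/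
open scoped Classical

noncomputable section

/-- The finite set of endpoints of a finite set `E` of edges (unordered pairs). -/
def endpoints {α : Type*} [DecidableEq α] (E : Finset (Sym2 α)) : Finset α :=
  E.biUnion fun e =>
    Sym2.lift ⟨fun a b => ({a, b} : Finset α), fun a b => Finset.pair_comm a b⟩ e

/-- The degree of a vertex `v` in the edge set `E`: the number of edges of `E`
containing `v`. -/
def edgeDeg {α : Type*} (E : Finset (Sym2 α)) (v : α) : ℕ :=
  (E.filter fun e => v ∈ e).card

/-- The graph with vertex set the endpoints of `E` and edge set `E`. -/
def edgeGraph {α : Type*} [DecidableEq α] (E : Finset (Sym2 α)) :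
    SimpleGraph {v // v ∈ endpoints E} where
  Adj a b := (a : α) ≠ (b : α) ∧ s((a : α), (b : α)) ∈ E
  symm := by
    refine ⟨?_⟩
    rintro a b ⟨hne, he⟩
    exact ⟨hne.symm, by rwa [Sym2.eq_swap]⟩
  loopless := by
    refine ⟨?_⟩
    rintro a ⟨hne, -⟩
    exact hne rfl

private lemma int_sq_eq_one {x : ℤ} (h : x ^ 2 = 1) : x = 1 ∨ x = -1 := by
  have h' : (x - 1) * (x + 1) = 0 := by
    have h2 : (x - 1) * (x + 1) = x ^ 2 - 1 := by ring
    rw [h2, h]; ring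
  rcases mul_eq_zero.mp h' with h1 | h1
  · left; omega
  · right; omega

private lemma twoPowInv_mono {a b : ℕ} (h : a ≤ b) : ((2:ℝ) ^ b)⁻¹ ≤ ((2:ℝ) ^ a)⁻¹ := by
  apply inv_anti₀
  · positivity
  · exact pow_le_pow_right₀ (by norm_num) h

private lemma oneDim : ∀ C : Finset ℤ, C.Nonempty →
    1 ≤ ∑ t ∈ C, ((2:ℝ) ^ (C.filter fun s => (t - s) ^ 2 = 1).card)⁻¹ := by
  intro C
  induction C using Finset.induction_on_max with
  | empty => rintro ⟨x, hx⟩; simp at hx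
  | insert a s hmax ih =>
    intro _
    have has : a ∉ s := fun h => lt_irrefl a (hmax a h)
    rw [Finset.sum_insert has]
    have hfa : (insert a s).filter (fun w => (a - w) ^ 2 = 1)
        = s.filter (fun w => (a - w) ^ 2 = 1) := by
      rw [Finset.filter_insert, if_neg (by norm_num)]
    have hne_tops : ∀ t ∈ s, t ≠ a - 1 →
        (insert a s).filter (fun w => (t - w) ^ 2 = 1)
          = s.filter (fun w => (t - w) ^ 2 = 1) := by
      intro t ht hta
      rw [Finset.filter_insert, if_neg]
      intro hsq
      rcases int_sq_eq_one hsq with h | h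
      · have := hmax t ht; omega
      · exact hta (by omega)
    by_cases hm : a - 1 ∈ s
    · -- a has exactly one neighbour, a - 1
      have hsne : s.Nonempty := ⟨a - 1, hm⟩
      have hfa2 : s.filter (fun w => (a - w) ^ 2 = 1) = {a - 1} := by
        apply Finset.ext
        intro w
        simp only [Finset.mem_filter, Finset.mem_singleton]
        constructor
        · rintro ⟨hw, hsq⟩
          rcases int_sq_eq_one hsq with h | h
          · omega
          · exfalso; have := hmax w hw; omega
        · rintro rfl; exact ⟨hm, by ring⟩
      have hterm_a : ((2:ℝ) ^ ((insert a s).filter (fun w => (a - w) ^ 2 = 1)).card)⁻¹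
          = ((2:ℝ) ^ (1:ℕ))⁻¹ := by rw [hfa, hfa2]; simp
      -- the neighbour a-1 term
      set k := (s.filter (fun w => (a - 1 - w) ^ 2 = 1)).card with hk
      have hfam : (insert a s).filter (fun w => (a - 1 - w) ^ 2 = 1)
          = insert a (s.filter (fun w => (a - 1 - w) ^ 2 = 1)) := by
        rw [Finset.filter_insert, if_pos (by ring)]
      have hcard_am : ((insert a s).filter (fun w => (a - 1 - w) ^ 2 = 1)).card = k + 1 := by
        rw [hfam, Finset.card_insert_of_notMem (fun h => has (Finset.mem_filter.mp h).1)]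
      -- split sums over s at a - 1
      have hsum_split : ∑ t ∈ s, ((2:ℝ) ^ ((insert a s).filter (fun w => (t - w) ^ 2 = 1)).card)⁻¹
          = ((2:ℝ) ^ (k+1))⁻¹ + ∑ t ∈ s.erase (a-1), ((2:ℝ) ^ (s.filter (fun w => (t - w) ^ 2 = 1)).card)⁻¹ := by
        rw [← Finset.add_sum_erase _ _ hm, hcard_am]
        congr 1
        apply Finset.sum_congr rfl
        intro t ht
        rw [hne_tops t (Finset.mem_of_mem_erase ht) (Finset.ne_of_mem_erase ht)]
      have hsum_split' : ∑ t ∈ s, ((2:ℝ) ^ (s.filter (fun w => (t - w) ^ 2 = 1)).card)⁻¹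
          = ((2:ℝ) ^ k)⁻¹ + ∑ t ∈ s.erase (a-1), ((2:ℝ) ^ (s.filter (fun w => (t - w) ^ 2 = 1)).card)⁻¹ := by
        rw [← Finset.add_sum_erase _ _ hm]
      have hih := ih hsne
      rw [hsum_split'] at hih
      rw [hterm_a, hsum_split]
      have h1 : ((2:ℝ) ^ (k+1))⁻¹ ≤ 2⁻¹ := by
        have := twoPowInv_mono (Nat.one_le_iff_ne_zero.mpr (Nat.succ_ne_zero k))
        simpa using this
      have h2 : ((2:ℝ) ^ k)⁻¹ - ((2:ℝ) ^ (k+1))⁻¹ = ((2:ℝ) ^ (k+1))⁻¹ := by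
        rw [pow_succ]
        field_simp
        ring
      have hpos : (0:ℝ) < ((2:ℝ) ^ (k+1))⁻¹ := by positivity
      simp only [pow_one]
      linarith
    · -- a is isolated in insert a s
      have hfa2 : s.filter (fun w => (a - w) ^ 2 = 1) = ∅ := by
        apply Finset.filter_false_of_mem
        intro w hw hsq
        rcases int_sq_eq_one hsq with h | h
        · have hw' : w = a - 1 := by omega
          exact hm (hw' ▸ hw)
        · have := hmax w hw; omega
      have hterm_a : ((2:ℝ) ^ ((insert a s).filter (fun w => (a - w) ^ 2 = 1)).card)⁻¹ = 1 := by
        rw [hfa, hfa2]; simp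
      have hrest : ∀ t ∈ s, (insert a s).filter (fun w => (t - w) ^ 2 = 1)
          = s.filter (fun w => (t - w) ^ 2 = 1) := by
        intro t ht
        exact hne_tops t ht (fun h => hm (h ▸ ht))
      have hnonneg : 0 ≤ ∑ t ∈ s, ((2:ℝ) ^ ((insert a s).filter (fun w => (t - w) ^ 2 = 1)).card)⁻¹ :=
        Finset.sum_nonneg fun t _ => by positivity
      rw [hterm_a]
      linarith

private lemma multiDim (d : ℕ) : ∀ V : Finset (Fin d → ℤ), V.Nonempty →
    1 ≤ ∑ v ∈ V, ((2:ℝ) ^ (V.filter fun w => ∑ k, (v k - w k) ^ 2 = 1).card)⁻¹ := by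
  induction d with
  | zero =>
    intro V hV
    have : ∀ v ∈ V, ((2:ℝ) ^ (V.filter fun w => ∑ k : Fin 0, (v k - w k) ^ 2 = 1).card)⁻¹ = 1 := by
      intro v _
      rw [Finset.filter_false_of_mem (fun w _ h => by simp at h)]
      simp
    rw [Finset.sum_congr rfl this, Finset.sum_const, nsmul_eq_mul, mul_one]
    exact_mod_cast Finset.one_le_card.mpr hV
  | succ d ih =>
    intro V hV
    set π : (Fin (d+1) → ℤ) → (Fin d → ℤ) := fun v k => v k.castSucc with hπ
    set P : Finset (Fin d → ℤ) := V.image π with hP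
    have hPne : P.Nonempty := hV.image π
    -- splitting of adjacency
    have hsplit : ∀ v w : Fin (d+1) → ℤ, (∑ k, (v k - w k) ^ 2 = 1) ↔
        ((π v = π w ∧ (v (Fin.last d) - w (Fin.last d)) ^ 2 = 1) ∨
         ((∑ k : Fin d, (π v k - π w k) ^ 2 = 1) ∧ v (Fin.last d) = w (Fin.last d))) := by
      intro v w
      rw [Fin.sum_univ_castSucc]
      have hA : 0 ≤ ∑ k : Fin d, (v k.castSucc - w k.castSucc) ^ 2 :=
        Finset.sum_nonneg fun k _ => sq_nonneg _
      have hB : 0 ≤ (v (Fin.last d) - w (Fin.last d)) ^ 2 := sq_nonneg _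
      have hAzero : (∑ k : Fin d, (v k.castSucc - w k.castSucc) ^ 2 = 0) ↔ π v = π w := by
        constructor
        · intro h0
          funext k
          have := (Finset.sum_eq_zero_iff_of_nonneg (fun k _ => sq_nonneg _)).mp h0 k
            (Finset.mem_univ k)
          have := pow_eq_zero_iff (n := 2) (by norm_num) |>.mp this
          show v k.castSucc = w k.castSucc
          omega
        · intro h
          apply Finset.sum_eq_zero
          intro k _
          have : v k.castSucc = w k.castSucc := congrFun h k
          rw [this]; ring
      have hBzero : ((v (Fin.last d) - w (Fin.last d)) ^ 2 = 0) ↔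
          v (Fin.last d) = w (Fin.last d) := by
        rw [pow_eq_zero_iff (by norm_num : (2:ℕ) ≠ 0)]
        omega
      have hsum_pi : (∑ k : Fin d, (π v k - π w k) ^ 2)
          = ∑ k : Fin d, (v k.castSucc - w k.castSucc) ^ 2 := rfl
      constructor
      · intro h
        rcases (by omega : (∑ k : Fin d, (v k.castSucc - w k.castSucc) ^ 2 = 0 ∧
            (v (Fin.last d) - w (Fin.last d)) ^ 2 = 1) ∨
            (∑ k : Fin d, (v k.castSucc - w k.castSucc) ^ 2 = 1 ∧
            (v (Fin.last d) - w (Fin.last d)) ^ 2 = 0)) with ⟨h1, h2⟩ | ⟨h1, h2⟩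
        · exact Or.inl ⟨hAzero.mp h1, h2⟩
        · exact Or.inr ⟨by rw [hsum_pi]; exact h1, hBzero.mp h2⟩
      · rintro (⟨h1, h2⟩ | ⟨h1, h2⟩)
        · rw [hAzero.mpr h1, h2]; ring
        · rw [hsum_pi] at h1
          rw [h1, hBzero.mpr h2]; ring
    -- ext lemma
    have hext : ∀ u w : Fin (d+1) → ℤ, π u = π w → u (Fin.last d) = w (Fin.last d) → u = w := by
      intro u w h1 h2
      funext k
      induction k using Fin.lastCases with
      | last => exact h2
      | cast j => exact congrFun h1 j
    -- the per-column bound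
    have key : ∀ x ∈ P, ((2:ℝ) ^ (P.filter fun y => ∑ k, (x k - y k) ^ 2 = 1).card)⁻¹ ≤
        ∑ v ∈ V.filter (fun v => π v = x),
          ((2:ℝ) ^ (V.filter fun w => ∑ k, (v k - w k) ^ 2 = 1).card)⁻¹ := by
      intro x hx
      set F := V.filter (fun v => π v = x) with hF
      have hFne : F.Nonempty := by
        obtain ⟨v, hv, hvx⟩ := Finset.mem_image.mp hx
        exact ⟨v, Finset.mem_filter.mpr ⟨hv, hvx⟩⟩
      set D := (P.filter fun y => ∑ k, (x k - y k) ^ 2 = 1).card with hD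
      have hinj : Set.InjOn (fun v : Fin (d+1) → ℤ => v (Fin.last d)) ↑F := by
        intro u hu w hw h
        exact hext u w (((Finset.mem_filter.mp hu).2).trans ((Finset.mem_filter.mp hw).2).symm) h
      set col := F.image (fun v => v (Fin.last d)) with hcol
      have hcolne : col.Nonempty := hFne.image _
      -- degree bound per vertex of the column
      have hdeg : ∀ v ∈ F, (V.filter fun w => ∑ k, (v k - w k) ^ 2 = 1).card ≤
          D + (F.filter fun w => (v (Fin.last d) - w (Fin.last d)) ^ 2 = 1).card := by
        intro v hv
        obtain ⟨hvV, hvx⟩ := Finset.mem_filter.mp hv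
        have hsub : V.filter (fun w => ∑ k, (v k - w k) ^ 2 = 1) ⊆
            (V.filter fun w => π w ≠ x ∧ ∑ k, (v k - w k) ^ 2 = 1) ∪
            (F.filter fun w => (v (Fin.last d) - w (Fin.last d)) ^ 2 = 1) := by
          intro w hw
          obtain ⟨hwV, hadj⟩ := Finset.mem_filter.mp hw
          rcases (hsplit v w).mp hadj with ⟨h1, h2⟩ | ⟨h1, h2⟩
          · apply Finset.mem_union_right
            exact Finset.mem_filter.mpr ⟨Finset.mem_filter.mpr ⟨hwV, h1 ▸ hvx⟩, h2⟩
          · apply Finset.mem_union_left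
            apply Finset.mem_filter.mpr
            refine ⟨hwV, fun hwx => ?_, hadj⟩
            rw [hvx, hwx] at h1
            simp only [sub_self] at h1
            rw [Finset.sum_eq_zero (fun k _ => by ring)] at h1
            exact one_ne_zero h1.symm
        calc (V.filter fun w => ∑ k, (v k - w k) ^ 2 = 1).card
            ≤ _ := Finset.card_le_card hsub
          _ ≤ (V.filter fun w => π w ≠ x ∧ ∑ k, (v k - w k) ^ 2 = 1).card +
              (F.filter fun w => (v (Fin.last d) - w (Fin.last d)) ^ 2 = 1).card :=
            Finset.card_union_le _ _
          _ ≤ D + _ := by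
            apply Nat.add_le_add_right
            apply Finset.card_le_card_of_injOn π
            · intro w hw
              obtain ⟨hwV, hwx, hadj⟩ := Finset.mem_filter.mp hw
              rcases (hsplit v w).mp hadj with ⟨h1, _⟩ | ⟨h1, _⟩
              · exact absurd (h1 ▸ hvx) hwx
              · exact Finset.mem_filter.mpr ⟨Finset.mem_image_of_mem π hwV, by rw [← hvx]; exact h1⟩
            · intro w1 hw1 w2 hw2 heq
              obtain ⟨_, hw1x, hadj1⟩ := Finset.mem_filter.mp hw1
              obtain ⟨_, hw2x, hadj2⟩ := Finset.mem_filter.mp hw2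
              have e1 : v (Fin.last d) = w1 (Fin.last d) := by
                rcases (hsplit v w1).mp hadj1 with ⟨h1, _⟩ | ⟨_, h2⟩
                · exact absurd (h1 ▸ hvx) hw1x
                · exact h2
              have e2 : v (Fin.last d) = w2 (Fin.last d) := by
                rcases (hsplit v w2).mp hadj2 with ⟨h1, _⟩ | ⟨_, h2⟩
                · exact absurd (h1 ▸ hvx) hw2x
                · exact h2
              exact hext w1 w2 heq (e1 ▸ e2)
      -- column degree = 1-dim degree via image
      have hcolcard : ∀ v ∈ F,
          (F.filter fun w => (v (Fin.last d) - w (Fin.last d)) ^ 2 = 1).card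
            = (col.filter fun s => (v (Fin.last d) - s) ^ 2 = 1).card := by
        intro v hv
        rw [hcol, Finset.filter_image]
        rw [Finset.card_image_of_injOn (hinj.mono (Finset.coe_subset.mpr (Finset.filter_subset _ _)))]
      calc ((2:ℝ) ^ D)⁻¹ = ((2:ℝ) ^ D)⁻¹ * 1 := by ring
        _ ≤ ((2:ℝ) ^ D)⁻¹ * ∑ t ∈ col, ((2:ℝ) ^ (col.filter fun s => (t - s) ^ 2 = 1).card)⁻¹ := by
            apply mul_le_mul_of_nonneg_left (oneDim col hcolne) (by positivity)
        _ = ∑ v ∈ F, ((2:ℝ) ^ D)⁻¹ *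
              ((2:ℝ) ^ (col.filter fun s => (v (Fin.last d) - s) ^ 2 = 1).card)⁻¹ := by
            rw [Finset.mul_sum, hcol, Finset.sum_image (fun u hu w hw h => hinj hu hw h)]
        _ ≤ ∑ v ∈ F, ((2:ℝ) ^ (V.filter fun w => ∑ k, (v k - w k) ^ 2 = 1).card)⁻¹ := by
            apply Finset.sum_le_sum
            intro v hv
            rw [← hcolcard v hv, ← mul_inv, ← pow_add]
            exact twoPowInv_mono (hdeg v hv)
    calc (1:ℝ) ≤ ∑ x ∈ P, ((2:ℝ) ^ (P.filter fun y => ∑ k, (x k - y k) ^ 2 = 1).card)⁻¹ :=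
          ih P hPne
      _ ≤ ∑ x ∈ P, ∑ v ∈ V.filter (fun v => π v = x),
            ((2:ℝ) ^ (V.filter fun w => ∑ k, (v k - w k) ^ 2 = 1).card)⁻¹ :=
          Finset.sum_le_sum key
      _ = ∑ v ∈ V, ((2:ℝ) ^ (V.filter fun w => ∑ k, (v k - w k) ^ 2 = 1).card)⁻¹ :=
          Finset.sum_fiberwise_of_maps_to (fun v hv => Finset.mem_image_of_mem π hv) _

private lemma mem_endpoints {α : Type*} [DecidableEq α] {E : Finset (Sym2 α)} {e : Sym2 α}
    (he : e ∈ E) {x : α} (hx : x ∈ e) : x ∈ endpoints E := by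
  rw [endpoints, Finset.mem_biUnion]
  refine ⟨e, he, ?_⟩
  revert hx
  induction e using Sym2.ind with
  | _ a b =>
    intro hx
    rcases Sym2.mem_iff.mp hx with h | h <;> simp [h]

/-- Component-counting bound on `ℤ^d`: if `E` is a finite nonempty set of
nearest-neighbour edges of the lattice `ℤ^d` (`d ≥ 2`), then the number of
connected components of the graph `(V(E), E)` is at most
`∑_{v ∈ V(E)} 2^{-deg_E(v)}`. -/
theorem card_components_le_sum_two_pow_neg_deg (d : ℕ) (hd : 2 ≤ d)
    (E : Finset (Sym2 (Fin d → ℤ))) (hEne : E.Nonempty)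
    (hNN : ∀ e ∈ E, ∃ a b : Fin d → ℤ,
      e = s(a, b) ∧ ∑ k : Fin d, (a k - b k) ^ 2 = 1) :
    (Nat.card (edgeGraph E).ConnectedComponent : ℝ) ≤
      ∑ v ∈ endpoints E, ((2 : ℝ) ^ edgeDeg E v)⁻¹ := by
  classical
  set G := edgeGraph E with hG
  haveI : Fintype G.ConnectedComponent := Fintype.ofFinite _
  -- per-component bound
  have hcomp : ∀ c : G.ConnectedComponent,
      1 ≤ ∑ v ∈ Finset.univ.filter (fun v => G.connectedComponentMk v = c),
        ((2 : ℝ) ^ edgeDeg E (v : Fin d → ℤ))⁻¹ := by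
    intro c
    set W : Finset (Fin d → ℤ) :=
      (Finset.univ.filter (fun v => G.connectedComponentMk v = c)).image Subtype.val with hW
    have hWsum : ∑ v ∈ Finset.univ.filter (fun v => G.connectedComponentMk v = c),
        ((2 : ℝ) ^ edgeDeg E (v : Fin d → ℤ))⁻¹
        = ∑ w ∈ W, ((2 : ℝ) ^ edgeDeg E w)⁻¹ := by
      rw [hW, Finset.sum_image (fun u _ w _ h => Subtype.ext h)]
    have hWne : W.Nonempty := by
      obtain ⟨v, hv⟩ := c.exists_rep
      exact ⟨v.val, Finset.mem_image_of_mem _ (Finset.mem_filter.mpr ⟨Finset.mem_univ _, hv⟩)⟩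
    -- the degree bound
    have hdegle : ∀ w ∈ W, edgeDeg E w ≤
        (W.filter fun u => ∑ k, (w k - u k) ^ 2 = 1).card := by
      intro w hwW
      obtain ⟨vw, hvw, rfl⟩ := Finset.mem_image.mp hwW
      have hED : edgeDeg E (vw : Fin d → ℤ)
          = (E.filter fun e => (vw : Fin d → ℤ) ∈ e).card := by
        rw [edgeDeg]
        congr 1
        exact Finset.filter_congr_decidable _ _ _
      rw [hED]
      have hsub : E.filter (fun e => (vw : Fin d → ℤ) ∈ e) ⊆
          ((W.filter fun u => ∑ k, ((vw : Fin d → ℤ) k - u k) ^ 2 = 1)).image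
            (fun u => s((vw : Fin d → ℤ), u)) := by
        intro e he'
        obtain ⟨he, hwe⟩ := Finset.mem_filter.mp he'
        set o := Sym2.Mem.other hwe with ho
        have hspec : s((vw : Fin d → ℤ), o) = e := Sym2.other_spec hwe
        obtain ⟨a, b, hab, hsum⟩ := hNN e he
        have hadj : ∑ k, ((vw : Fin d → ℤ) k - o k) ^ 2 = 1 := by
          rw [hab] at hspec
          rcases Sym2.eq_iff.mp hspec with ⟨h1, h2⟩ | ⟨h1, h2⟩
          · rw [h1, h2]; exact hsum
          · rw [h1, h2]
            rw [← hsum]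
            exact Finset.sum_congr rfl fun k _ => by ring
        have hne : (vw : Fin d → ℤ) ≠ o := by
          intro h
          rw [← h] at hadj
          rw [Finset.sum_eq_zero (fun k _ => by ring)] at hadj
          exact one_ne_zero hadj.symm
        have hoE : o ∈ endpoints E := mem_endpoints he (Sym2.other_mem hwe)
        have hGadj : G.Adj vw ⟨o, hoE⟩ := by
          rw [hG]
          exact ⟨hne, by rw [Sym2.other_spec hwe]; exact he⟩
        have hcomp_o : G.connectedComponentMk ⟨o, hoE⟩ = c := by
          rw [← (Finset.mem_filter.mp hvw).2]
          exact SimpleGraph.ConnectedComponent.sound hGadj.symm.reachable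
        apply Finset.mem_image.mpr
        refine ⟨o, Finset.mem_filter.mpr ⟨?_, hadj⟩, Sym2.other_spec hwe⟩
        exact Finset.mem_image.mpr ⟨⟨o, hoE⟩,
          Finset.mem_filter.mpr ⟨Finset.mem_univ _, hcomp_o⟩, rfl⟩
      calc (E.filter fun e => (vw : Fin d → ℤ) ∈ e).card
          ≤ _ := Finset.card_le_card hsub
        _ ≤ _ := Finset.card_image_le
    rw [hWsum]
    calc (1:ℝ) ≤ ∑ w ∈ W, ((2:ℝ) ^ (W.filter fun u => ∑ k, (w k - u k) ^ 2 = 1).card)⁻¹ :=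
          multiDim d W hWne
      _ ≤ ∑ w ∈ W, ((2 : ℝ) ^ edgeDeg E w)⁻¹ :=
          Finset.sum_le_sum fun w hw => twoPowInv_mono (hdegle w hw)
  -- assemble
  rw [Nat.card_eq_fintype_card]
  have h2 : ∑ c : G.ConnectedComponent,
      ∑ v ∈ Finset.univ.filter (fun v => G.connectedComponentMk v = c),
        ((2 : ℝ) ^ edgeDeg E (v : Fin d → ℤ))⁻¹
      = ∑ v : {x // x ∈ endpoints E}, ((2 : ℝ) ^ edgeDeg E (v : Fin d → ℤ))⁻¹ :=
    Finset.sum_fiberwise_of_maps_to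
      (fun v _ => Finset.mem_univ (G.connectedComponentMk v)) _
  calc (Fintype.card G.ConnectedComponent : ℝ)
      = ∑ _c : G.ConnectedComponent, (1:ℝ) := by
        rw [Finset.sum_const, Finset.card_univ, nsmul_eq_mul, mul_one]
    _ ≤ ∑ c : G.ConnectedComponent,
          ∑ v ∈ Finset.univ.filter (fun v => G.connectedComponentMk v = c),
            ((2 : ℝ) ^ edgeDeg E (v : Fin d → ℤ))⁻¹ :=
        Finset.sum_le_sum fun c _ => hcomp c
    _ = ∑ v : {x // x ∈ endpoints E}, ((2 : ℝ) ^ edgeDeg E (v : Fin d → ℤ))⁻¹ := h2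
    _ = ∑ v ∈ endpoints E, ((2 : ℝ) ^ edgeDeg E v)⁻¹ := Finset.sum_coe_sort (endpoints E) (fun v => ((2:ℝ) ^ edgeDeg E v)⁻¹)


end
end
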